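/- Let q, β > 0, 0 < α < 1, n ∈ ℕ with n^{1-α} > 2, r ∈ ℕ, and f : ℝ → ℝ bounded and continuous. Then for the r-fold iterate B_n^r, we have ‖B_n^r(f) - f‖_∞ ≤ r·‖B_n(f) - f‖_∞ ≤ r·[ω(f, n^{-α}) + 2(q + 1/q)‖f‖_∞·e^{-β(n^{1-α} - 1)}]. -/

import Mathlib

open MeasureTheory Filter Real
open Topology

noncomputable def nu (q β x : ℝ) : ℝ :=
  (1 - q * Real.exp (-β * x)) / (1 + q * Real.exp (-β * x))

noncomputable def G (q β x : ℝ) : ℝ := (1/4) * (nu q β (x+1) - nu q β (x-1))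

noncomputable def Psi (q β x : ℝ) : ℝ := (G q β x + G (1/q) β x) / 2

noncomputable def omega (f : ℝ → ℝ) (θ : ℝ) : ℝ :=
  sSup {d : ℝ | ∃ x y : ℝ, |x - y| ≤ θ ∧ d = |f x - f y|}

noncomputable def supNorm (f : ℝ → ℝ) : ℝ := ⨆ x : ℝ, |f x|

noncomputable def B (q β : ℝ) (n : ℕ) (f : ℝ → ℝ) (x : ℝ) : ℝ :=
  ∫ v : ℝ, f (v / n) * Psi q β ((n : ℝ) * x - v)

lemma nu_eq {q β : ℝ} (hq : 0 < q) (x : ℝ) :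
    nu q β x = 1 - 2*q / (Real.exp (β*x) + q) := by
  have he : 0 < Real.exp (β*x) := Real.exp_pos _
  have h2 : 0 < Real.exp (β*x) + q := by positivity
  have h1 : 0 < 1 + q * Real.exp (-(β*x)) := by positivity
  unfold nu
  rw [neg_mul, Real.exp_neg]
  field_simp
  ring

lemma nu_mono {q β : ℝ} (hq : 0 < q) (hβ : 0 < β) : Monotone (nu q β) := by
  intro x y hxy
  rw [nu_eq hq, nu_eq hq]
  have hx : 0 < Real.exp (β*x) + q := by positivity
  have h2 : Real.exp (β*x) + q ≤ Real.exp (β*y) + q := by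
    have : β*x ≤ β*y := by nlinarith [hβ.le]
    have := Real.exp_le_exp.2 this
    linarith
  have h3 : 2*q/(Real.exp (β*y)+q) ≤ 2*q/(Real.exp (β*x)+q) :=
    div_le_div_of_nonneg_left (by positivity) hx h2
  linarith

lemma nu_lt_one {q β : ℝ} (hq : 0 < q) (x : ℝ) : nu q β x < 1 := by
  rw [nu_eq hq]
  have hx : 0 < Real.exp (β*x) + q := by positivity
  have : 0 < 2*q / (Real.exp (β*x) + q) := by positivity
  linarith

lemma neg_one_lt_nu {q β : ℝ} (hq : 0 < q) (x : ℝ) : -1 < nu q β x := by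
  rw [nu_eq hq]
  have hx : 0 < Real.exp (β*x) := Real.exp_pos _
  have hx2 : 0 < Real.exp (β*x) + q := by positivity
  have : 2*q / (Real.exp (β*x) + q) < 2 := by
    rw [div_lt_iff₀ hx2]; nlinarith
  linarith

lemma nu_neg {q β : ℝ} (hq : 0 < q) (x : ℝ) : nu q β (-x) = - nu (1/q) β x := by
  have he : 0 < Real.exp (β*x) := Real.exp_pos _
  rw [nu_eq hq, nu_eq (by positivity : (0:ℝ) < 1/q)]
  rw [show β * -x = -(β*x) by ring, Real.exp_neg]
  have h1 : 0 < (Real.exp (β*x))⁻¹ + q := by positivity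
  have h2 : 0 < Real.exp (β*x) + 1/q := by positivity
  field_simp
  ring

lemma G_nonneg {q β : ℝ} (hq : 0 < q) (hβ : 0 < β) (x : ℝ) : 0 ≤ G q β x := by
  have := nu_mono hq hβ (show x - 1 ≤ x + 1 by linarith)
  unfold G; linarith

lemma G_neg {q β : ℝ} (hq : 0 < q) (x : ℝ) : G q β (-x) = G (1/q) β x := by
  unfold G
  rw [show -x + 1 = -(x-1) by ring, show -x - 1 = -(x+1) by ring,
    nu_neg hq, nu_neg hq]
  ring

lemma Psi_nonneg {q β : ℝ} (hq : 0 < q) (hβ : 0 < β) (x : ℝ) : 0 ≤ Psi q β x := by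
  have h1 := G_nonneg hq hβ x
  have h2 := G_nonneg (by positivity : (0:ℝ) < 1/q) hβ x
  unfold Psi; linarith

lemma Psi_neg {q β : ℝ} (hq : 0 < q) (x : ℝ) : Psi q β (-x) = Psi q β x := by
  unfold Psi
  rw [G_neg hq, G_neg (by positivity : (0:ℝ) < 1/q)]
  rw [one_div_one_div]
  ring

noncomputable def Nq (q β x : ℝ) : ℝ := x + (2/β) * Real.log (1 + q * Real.exp (-β * x))

noncomputable def Fq (q β u : ℝ) : ℝ := (Nq q β (u+1) - Nq q β (u-1))/4

lemma hasDerivAt_Nq {q β : ℝ} (hq : 0 < q) (hβ : 0 < β) (x : ℝ) :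
    HasDerivAt (Nq q β) (nu q β x) x := by
  have h1 : HasDerivAt (fun x : ℝ => -β * x) (-β) x := by
    simpa using (hasDerivAt_id x).const_mul (-β)
  have h2 : HasDerivAt (fun x : ℝ => Real.exp (-β*x)) (Real.exp (-β*x) * (-β)) x := h1.exp
  have h3 : HasDerivAt (fun x : ℝ => 1 + q * Real.exp (-β*x))
      (q * (Real.exp (-β*x) * (-β))) x := (h2.const_mul q).const_add 1
  have hd : 0 < 1 + q * Real.exp (-β*x) := by positivity
  have h4 := (h3.log (ne_of_gt hd)).const_mul (2/β)
  have h5 := (hasDerivAt_id x).add h4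
  refine h5.congr_deriv ?_
  unfold nu
  field_simp
  ring

lemma hasDerivAt_Fq {q β : ℝ} (hq : 0 < q) (hβ : 0 < β) (u : ℝ) :
    HasDerivAt (Fq q β) (G q β u) u := by
  have h1 : HasDerivAt (fun u : ℝ => Nq q β (u+1)) (nu q β (u+1)) u := by
    simpa [Function.comp_def] using (hasDerivAt_Nq hq hβ (u+1)).comp u ((hasDerivAt_id u).add_const 1)
  have h2 : HasDerivAt (fun u : ℝ => Nq q β (u-1)) (nu q β (u-1)) u := by
    simpa [Function.comp_def] using (hasDerivAt_Nq hq hβ (u-1)).comp u ((hasDerivAt_id u).sub_const 1)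
  have h3 := (h1.sub h2).div_const 4
  refine h3.congr_deriv ?_
  unfold G; ring

lemma tendsto_log_term {q β : ℝ} (hq : 0 < q) (hβ : 0 < β) (c : ℝ) :
    Tendsto (fun u : ℝ => Real.log (1 + q * Real.exp (-β * (u + c)))) atTop (𝓝 0) := by
  have h0 : Tendsto (fun u : ℝ => β * (u + c)) atTop atTop :=
    (tendsto_atTop_add_const_right atTop c tendsto_id).const_mul_atTop hβ
  have h1 : Tendsto (fun u : ℝ => -(β * (u + c))) atTop atBot :=
    tendsto_neg_atTop_atBot.comp h0
  have h2 : Tendsto (fun u : ℝ => Real.exp (-β*(u+c))) atTop (𝓝 0) := by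
    simpa [neg_mul, Function.comp_def] using Real.tendsto_exp_atBot.comp h1
  have h3 : Tendsto (fun u : ℝ => 1 + q * Real.exp (-β*(u+c))) atTop (𝓝 1) := by
    have := (h2.const_mul q).const_add 1
    simpa using this
  have h4 := ((Real.continuousAt_log one_ne_zero).tendsto).comp h3
  simpa [Function.comp_def] using h4

lemma tendsto_Fq {q β : ℝ} (hq : 0 < q) (hβ : 0 < β) :
    Tendsto (Fq q β) atTop (𝓝 (1/2)) := by
  have e1 := tendsto_log_term hq hβ 1
  have e2 := tendsto_log_term hq hβ (-1)
  have h : Tendsto (fun u : ℝ => (2 + (2/β) * (Real.log (1 + q * Real.exp (-β * (u + 1)))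
      - Real.log (1 + q * Real.exp (-β * (u + (-1))))))/4) atTop
      (𝓝 ((2 + (2/β)*((0:ℝ)-0))/4)) :=
    (tendsto_const_nhds.add ((e1.sub e2).const_mul _)).div_const 4
  have hfun : Fq q β = fun u : ℝ => (2 + (2/β) * (Real.log (1 + q * Real.exp (-β * (u + 1)))
      - Real.log (1 + q * Real.exp (-β * (u + (-1))))))/4 := by
    funext u
    unfold Fq Nq
    rw [show u + (-1:ℝ) = u - 1 by ring]
    ring
  rw [hfun]
  convert h using 2
  norm_num

lemma continuous_Fq {q β : ℝ} (hq : 0 < q) (hβ : 0 < β) : Continuous (Fq q β) :=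
  continuous_iff_continuousAt.2 fun x => (hasDerivAt_Fq hq hβ x).continuousAt

lemma integral_Ioi_G {q β : ℝ} (hq : 0 < q) (hβ : 0 < β) (a : ℝ) :
    ∫ u in Set.Ioi a, G q β u = 1/2 - Fq q β a :=
  integral_Ioi_of_hasDerivAt_of_nonneg ((continuous_Fq hq hβ).continuousWithinAt)
    (fun x _ => hasDerivAt_Fq hq hβ x) (fun x _ => G_nonneg hq hβ x) (tendsto_Fq hq hβ)

lemma integrableOn_Ioi_G {q β : ℝ} (hq : 0 < q) (hβ : 0 < β) (a : ℝ) :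
    IntegrableOn (G q β) (Set.Ioi a) volume :=
  integrableOn_Ioi_deriv_of_nonneg ((continuous_Fq hq hβ).continuousWithinAt)
    (fun x _ => hasDerivAt_Fq hq hβ x) (fun x _ => G_nonneg hq hβ x) (tendsto_Fq hq hβ)

lemma G_neg' {q β : ℝ} (hq : 0 < q) (x : ℝ) : G q β x = G (1/q) β (-x) := by
  rw [G_neg (by positivity : (0:ℝ) < 1/q), one_div_one_div]

lemma integrableOn_Iic_G {q β : ℝ} (hq : 0 < q) (hβ : 0 < β) (a : ℝ) :
    IntegrableOn (G q β) (Set.Iic a) volume := by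
  have m : MeasurableEmbedding fun x : ℝ => -x := (Homeomorph.neg ℝ).measurableEmbedding
  have h : IntegrableOn (G (1/q) β) (Set.Ici (-a)) volume :=
    Iff.mpr integrableOn_Ici_iff_integrableOn_Ioi (integrableOn_Ioi_G (by positivity) hβ (-a))
  have : (G q β) = fun x => G (1/q) β (-x) := funext (G_neg' hq)
  rw [this]
  have hiff := m.integrableOn_map_iff (f := fun x => G (1/q) β (-x)) (μ := volume)
    (s := Set.Iic a)
  rw [show Measure.map (fun x : ℝ => -x) volume = volume from Measure.map_neg_eq_self volume]
    at hiff
  rw [hiff]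
  simpa [Function.comp_def, Set.neg_preimage, Set.neg_Iic] using h

lemma integral_Iic_G {q β : ℝ} (hq : 0 < q) (hβ : 0 < β) (a : ℝ) :
    ∫ u in Set.Iic a, G q β u = 1/2 - Fq (1/q) β (-a) := by
  have : (G q β) = fun x => G (1/q) β (-x) := funext (G_neg' hq)
  rw [this, integral_comp_neg_Iic, integral_Ioi_G (by positivity) hβ]

lemma integrable_G {q β : ℝ} (hq : 0 < q) (hβ : 0 < β) : Integrable (G q β) volume := by
  have := (integrableOn_Iic_G hq hβ 0).union (integrableOn_Ioi_G hq hβ 0)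
  rwa [Set.Iic_union_Ioi, integrableOn_univ] at this

lemma Fq_zero_add {q β : ℝ} (hq : 0 < q) (hβ : 0 < β) :
    Fq q β 0 + Fq (1/q) β 0 = 0 := by
  have hb : β ≠ 0 := ne_of_gt hβ
  have hE0 : 0 < Real.exp β := Real.exp_pos β
  set E : ℝ := Real.exp β with hE
  have hexp1 : Real.exp (-β * ((0:ℝ)+1)) = E⁻¹ := by
    rw [show -β * ((0:ℝ)+1) = -β by ring, Real.exp_neg]
  have hexp2 : Real.exp (-β * ((0:ℝ)-1)) = E := by
    rw [show -β * ((0:ℝ)-1) = β by ring]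
  have p1 : (0:ℝ) < 1 + q * E⁻¹ := by positivity
  have p2 : (0:ℝ) < 1 + (1/q) * E⁻¹ := by positivity
  have p3 : (0:ℝ) < 1 + q * E := by positivity
  have p4 : (0:ℝ) < 1 + (1/q) * E := by positivity
  have h1 : (1 + q*E⁻¹) * (1 + (1/q)*E⁻¹) = Real.exp (-(2*β)) * ((1 + q*E)*(1 + (1/q)*E)) := by
    have hee : Real.exp (-(2*β)) = E⁻¹ * E⁻¹ := by
      rw [← Real.exp_neg, ← Real.exp_add]; ring_nf
    rw [hee]
    field_simp
    ring
  have l1 : Real.log ((1 + q*E⁻¹) * (1 + (1/q)*E⁻¹))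
      = Real.log (1 + q*E⁻¹) + Real.log (1 + (1/q)*E⁻¹) :=
    Real.log_mul (ne_of_gt p1) (ne_of_gt p2)
  have l2 : Real.log (Real.exp (-(2*β)) * ((1 + q*E)*(1 + (1/q)*E)))
      = -(2*β) + (Real.log (1 + q*E) + Real.log (1 + (1/q)*E)) := by
    rw [Real.log_mul (Real.exp_ne_zero _) (by positivity),
      Real.log_exp, Real.log_mul (ne_of_gt p3) (ne_of_gt p4)]
  have key : Real.log (1 + q*E⁻¹) + Real.log (1 + (1/q)*E⁻¹)
      - (Real.log (1 + q*E) + Real.log (1 + (1/q)*E)) = -(2*β) := by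
    rw [← l1, h1, l2]; ring
  unfold Fq Nq
  rw [hexp1, hexp2]
  have h2 : (2/β) * (Real.log (1 + q*E⁻¹) + Real.log (1 + (1/q)*E⁻¹)
      - (Real.log (1 + q*E) + Real.log (1 + (1/q)*E))) = -4 := by
    rw [key]; field_simp; ring
  nlinarith [h2]

lemma integral_G_total {q β : ℝ} (hq : 0 < q) (hβ : 0 < β) : ∫ u, G q β u = 1 := by
  rw [← intervalIntegral.integral_Iic_add_Ioi (integrableOn_Iic_G hq hβ 0) (integrableOn_Ioi_G hq hβ 0),
    integral_Iic_G hq hβ 0, integral_Ioi_G hq hβ 0, neg_zero]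
  have := Fq_zero_add hq hβ
  linarith

lemma continuous_nu {q β : ℝ} (hq : 0 < q) : Continuous (nu q β) := by
  unfold nu
  exact Continuous.div (by continuity) (by continuity)
    (fun x => ne_of_gt (by positivity))

lemma continuous_G {q β : ℝ} (hq : 0 < q) : Continuous (G q β) := by
  unfold G
  exact Continuous.mul continuous_const
    (((continuous_nu hq).comp (by continuity)).sub ((continuous_nu hq).comp (by continuity)))

lemma continuous_Psi {q β : ℝ} (hq : 0 < q) : Continuous (Psi q β) := by
  unfold Psi
  exact Continuous.div ((continuous_G hq).add (continuous_G (by positivity))) continuous_const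
    (fun _ => by norm_num)

lemma integrable_Psi {q β : ℝ} (hq : 0 < q) (hβ : 0 < β) : Integrable (Psi q β) volume := by
  have h1 := integrable_G hq hβ
  have h2 := integrable_G (show (0:ℝ) < 1/q by positivity) hβ
  exact (h1.add h2).div_const 2

lemma integral_Psi {q β : ℝ} (hq : 0 < q) (hβ : 0 < β) : ∫ u, Psi q β u = 1 := by
  have h1 := integrable_G hq hβ
  have h2 := integrable_G (show (0:ℝ) < 1/q by positivity) hβ
  unfold Psi
  rw [integral_div, integral_add h1 h2, integral_G_total hq hβ,
    integral_G_total (show (0:ℝ) < 1/q by positivity) hβ]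
  norm_num

lemma tail_G {q β : ℝ} (hq : 0 < q) (hβ : 0 < β) (T : ℝ) :
    ∫ u in Set.Ioi T, G q β u ≤ q * Real.exp (-β*(T-1)) := by
  rw [integral_Ioi_G hq hβ]
  set a := q * Real.exp (-β*(T-1)) with ha_def
  set b := q * Real.exp (-β*(T+1)) with hb_def
  have ha : 0 < a := by positivity
  have hb : 0 < b := by positivity
  have hb_eq : b = a * Real.exp (-(2*β)) := by
    rw [ha_def, hb_def, mul_assoc, ← Real.exp_add]; ring_nf
  have hba : b ≤ a := by
    rw [hb_eq]
    nlinarith [Real.exp_le_one_iff.2 (by nlinarith : -(2*β) ≤ 0), ha.le, Real.exp_pos (-(2*β))]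
  have heq : 1/2 - Fq q β T = (Real.log (1+a) - Real.log (1+b))/(2*β) := by
    unfold Fq Nq
    rw [ha_def, hb_def]
    field_simp
    ring
  have hlog : Real.log (1+a) - Real.log (1+b) ≤ 2*β*a := by
    have h1 : Real.log (1+a) - Real.log (1+b) = Real.log ((1+a)/(1+b)) :=
      (Real.log_div (by positivity) (by positivity)).symm
    have h2 : Real.log ((1+a)/(1+b)) ≤ (1+a)/(1+b) - 1 :=
      Real.log_le_sub_one_of_pos (by positivity)
    have h3 : (1+a)/(1+b) - 1 ≤ a - b := by
      rw [div_sub_one (by positivity : (1:ℝ)+b ≠ 0)]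
      have : (1+a) - (1+b) = a - b := by ring
      rw [this]
      exact div_le_self (by linarith) (by linarith)
    have h4 : a - b ≤ 2*β*a := by
      have := Real.add_one_le_exp (-(2*β))
      rw [hb_eq]
      nlinarith [ha.le]
    linarith
  rw [heq, div_le_iff₀ (by positivity : (0:ℝ) < 2*β)]
  linarith

lemma tail_Psi_Ioi {q β : ℝ} (hq : 0 < q) (hβ : 0 < β) (T : ℝ) :
    ∫ u in Set.Ioi T, Psi q β u ≤ (q + 1/q)/2 * Real.exp (-β*(T-1)) := by
  have hq' : (0:ℝ) < 1/q := by positivity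
  have heq : ∫ u in Set.Ioi T, Psi q β u
      = ((∫ u in Set.Ioi T, G q β u) + ∫ u in Set.Ioi T, G (1/q) β u)/2 := by
    unfold Psi
    rw [integral_div, integral_add (integrableOn_Ioi_G hq hβ T) (integrableOn_Ioi_G hq' hβ T)]
  rw [heq]
  have t1 := tail_G hq hβ T
  have t2 := tail_G hq' hβ T
  have := Real.exp_pos (-β*(T-1))
  linarith

lemma tail_Psi {q β : ℝ} (hq : 0 < q) (hβ : 0 < β) {T : ℝ} (hT : 0 < T) :
    ∫ u in Set.Iic (-T) ∪ Set.Ici T, Psi q β u ≤ (q + 1/q) * Real.exp (-β*(T-1)) := by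
  have disj : Disjoint (Set.Iic (-T)) (Set.Ici T) := by
    apply Set.disjoint_left.2
    intro x hx1 hx2
    simp only [Set.mem_Iic, Set.mem_Ici] at *
    linarith
  rw [setIntegral_union disj measurableSet_Ici
    ((integrable_Psi hq hβ).integrableOn) ((integrable_Psi hq hβ).integrableOn)]
  have h1 : ∫ u in Set.Iic (-T), Psi q β u = ∫ u in Set.Ioi T, Psi q β u := by
    have := integral_comp_neg_Iic (-T) (Psi q β)
    simp_rw [Psi_neg hq, neg_neg] at this
    rw [this]
  have h2 : ∫ u in Set.Ici T, Psi q β u = ∫ u in Set.Ioi T, Psi q β u :=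
    integral_Ici_eq_integral_Ioi
  rw [h1, h2]
  have := tail_Psi_Ioi hq hβ T
  linarith

lemma integral_comp_sub_left'' (f : ℝ → ℝ) (a : ℝ) : ∫ x, f (a - x) = ∫ x, f x := by
  calc ∫ x, f (a - x) = ∫ x, f (a + x) := by
        rw [← integral_neg_eq_self (fun x => f (a + x)) volume]; simp [sub_eq_add_neg]
    _ = ∫ x, f x := integral_add_left_eq_self (f : ℝ → ℝ) a

lemma B_eq {q β : ℝ} {n : ℕ} (hn : 0 < n) (g : ℝ → ℝ) (x : ℝ) :
    B q β n g x = ∫ u, g (x - u/n) * Psi q β u := by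
  have hn' : ((n:ℝ)) ≠ 0 := by positivity
  unfold B
  have h := integral_comp_sub_left'' (fun u => g (((n:ℝ)*x - u)/n) * Psi q β u) ((n:ℝ)*x)
  calc (∫ v : ℝ, g (v / n) * Psi q β ((n:ℝ)*x - v))
      = ∫ v : ℝ, g (((n:ℝ)*x - ((n:ℝ)*x - v))/n) * Psi q β ((n:ℝ)*x - v) := by
        congr 1; funext v; rw [show (n:ℝ)*x - ((n:ℝ)*x - v) = v by ring]
    _ = ∫ u : ℝ, g (((n:ℝ)*x - u)/n) * Psi q β u := h
    _ = ∫ u : ℝ, g (x - u/n) * Psi q β u := by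
        congr 1; funext u
        rw [show ((n:ℝ)*x - u)/n = x - u/n by field_simp]

lemma integrable_integrand {q β : ℝ} (hq : 0 < q) (hβ : 0 < β) {n : ℕ} (hn : 0 < n)
    {g : ℝ → ℝ} (hgc : Continuous g) {M : ℝ} (hM : ∀ y, |g y| ≤ M) (x : ℝ) :
    Integrable (fun u => g (x - u/n) * Psi q β u) volume := by
  apply (integrable_Psi hq hβ).bdd_mul
    ((hgc.comp (by continuity)).aestronglyMeasurable)
  exact Eventually.of_forall fun u => (Real.norm_eq_abs _).le.trans (hM _)

lemma B_bound {q β : ℝ} (hq : 0 < q) (hβ : 0 < β) {n : ℕ} (hn : 0 < n)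
    {g : ℝ → ℝ} (hgc : Continuous g) {M : ℝ} (hM : ∀ y, |g y| ≤ M) (x : ℝ) :
    |B q β n g x| ≤ M := by
  have hM0 : 0 ≤ M := le_trans (abs_nonneg _) (hM 0)
  rw [B_eq hn]
  have h1 : |∫ u, g (x - u/n) * Psi q β u| ≤ ∫ u, |g (x - u/n) * Psi q β u| := by
    have := norm_integral_le_integral_norm (fun u => g (x - u/n) * Psi q β u) (μ := volume)
    simpa only [Real.norm_eq_abs] using this
  have h2 : ∫ u, |g (x - u/n) * Psi q β u| ≤ ∫ u, M * Psi q β u := by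
    apply integral_mono ((integrable_integrand hq hβ hn hgc hM x).abs)
      ((integrable_Psi hq hβ).const_mul M)
    intro u
    simp only []
    rw [abs_mul, abs_of_nonneg (Psi_nonneg hq hβ u)]
    exact mul_le_mul_of_nonneg_right (hM _) (Psi_nonneg hq hβ u)
  rw [MeasureTheory.integral_const_mul, integral_Psi hq hβ, mul_one] at h2
  linarith

lemma B_continuous {q β : ℝ} (hq : 0 < q) (hβ : 0 < β) {n : ℕ} (hn : 0 < n)
    {g : ℝ → ℝ} (hgc : Continuous g) {M : ℝ} (hM : ∀ y, |g y| ≤ M) :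
    Continuous (B q β n g) := by
  have : B q β n g = fun x => ∫ u, g (x - u/n) * Psi q β u := funext (B_eq hn g)
  rw [this]
  apply continuous_iff_continuousAt.2
  intro x₀
  apply continuousAt_of_dominated (bound := fun u => M * Psi q β u)
  · exact Eventually.of_forall fun x =>
      ((hgc.comp (by continuity)).mul (continuous_Psi hq)).aestronglyMeasurable
  · apply Eventually.of_forall fun x => Eventually.of_forall fun u => ?_
    rw [Real.norm_eq_abs, abs_mul, abs_of_nonneg (Psi_nonneg hq hβ u)]
    exact mul_le_mul_of_nonneg_right (hM _) (Psi_nonneg hq hβ u)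
  · exact (integrable_Psi hq hβ).const_mul M
  · exact Eventually.of_forall fun u =>
      ((hgc.comp (by continuity)).mul continuous_const).continuousAt

lemma iterate_props {q β : ℝ} (hq : 0 < q) (hβ : 0 < β) {n : ℕ} (hn : 0 < n)
    {f : ℝ → ℝ} (hf : Continuous f) {M : ℝ} (hM : ∀ y, |f y| ≤ M) (r : ℕ) :
    Continuous ((B q β n)^[r] f) ∧ ∀ y, |(B q β n)^[r] f y| ≤ M := by
  induction r with
  | zero => exact ⟨hf, hM⟩
  | succ k ih =>
    rw [Function.iterate_succ_apply']
    exact ⟨B_continuous hq hβ hn ih.1 ih.2, B_bound hq hβ hn ih.1 ih.2⟩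

lemma iter_bound {q β : ℝ} (hq : 0 < q) (hβ : 0 < β) {n : ℕ} (hn : 0 < n)
    {f : ℝ → ℝ} (hf : Continuous f) {M : ℝ} (hM : ∀ y, |f y| ≤ M)
    {D : ℝ} (hD : ∀ x, |B q β n f x - f x| ≤ D) (r : ℕ) :
    ∀ x, |(B q β n)^[r] f x - f x| ≤ r * D := by
  induction r with
  | zero => simp
  | succ k ih =>
    intro x
    have hk := iterate_props hq hβ hn hf hM k
    rw [Function.iterate_succ_apply']
    have int1 := integrable_integrand hq hβ hn hk.1 hk.2 x
    have int2 := integrable_integrand hq hβ hn hf hM x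
    have hlin : B q β n (fun y => (B q β n)^[k] f y - f y) x
        = B q β n ((B q β n)^[k] f) x - B q β n f x := by
      rw [B_eq hn, B_eq hn, B_eq hn, ← integral_sub int1 int2]
      congr 1; funext u; ring
    have key : |B q β n ((B q β n)^[k] f) x - B q β n f x| ≤ k * D := by
      rw [← hlin]
      exact B_bound hq hβ hn (hk.1.sub hf) (fun y => ih y) x
    calc |B q β n ((B q β n)^[k] f) x - f x|
        ≤ |B q β n ((B q β n)^[k] f) x - B q β n f x| + |B q β n f x - f x| :=
          abs_sub_le _ _ _
      _ ≤ k * D + D := add_le_add key (hD x)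
      _ = (k+1 : ℕ) * D := by push_cast; ring

lemma le_supNorm {f : ℝ → ℝ} {M : ℝ} (hM : ∀ y, |f y| ≤ M) (x : ℝ) : |f x| ≤ supNorm f :=
  le_ciSup ⟨M, by rintro y ⟨z, rfl⟩; exact hM z⟩ x

lemma le_omega {f : ℝ → ℝ} {M θ : ℝ} (hM : ∀ y, |f y| ≤ M) {x y : ℝ} (h : |x - y| ≤ θ) :
    |f x - f y| ≤ omega f θ := by
  apply le_csSup
  · refine ⟨2*M, ?_⟩
    rintro d ⟨a, b, hab, rfl⟩
    calc |f a - f b| ≤ |f a| + |f b| := abs_sub _ _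
      _ ≤ 2*M := by linarith [hM a, hM b]
  · exact ⟨x, y, h, rfl⟩

lemma omega_nonneg {f : ℝ → ℝ} {M θ : ℝ} (hM : ∀ y, |f y| ≤ M) (hθ : 0 ≤ θ) :
    0 ≤ omega f θ := by
  have := le_omega hM (x := 0) (y := 0) (θ := θ) (by simpa using hθ)
  calc (0:ℝ) = |f 0 - f 0| := by simp
    _ ≤ omega f θ := this

lemma B_single {q β α : ℝ} (hq : 0 < q) (hβ : 0 < β) (hα0 : 0 < α) (hα1 : α < 1)
    {n : ℕ} (hn : 2 < (n : ℝ) ^ (1 - α)) {f : ℝ → ℝ} (hf : Continuous f) {M : ℝ}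
    (hM : ∀ y, |f y| ≤ M) (x : ℝ) :
    |B q β n f x - f x| ≤ omega f ((n:ℝ)^(-α))
      + 2*(q+1/q)*M*Real.exp (-β*((n:ℝ)^(1-α)-1)) := by
  have hn0 : 0 < n := by
    rcases Nat.eq_zero_or_pos n with h | h
    · subst h
      rw [Nat.cast_zero, Real.zero_rpow (sub_ne_zero.2 (by linarith : (1:ℝ) ≠ α))] at hn
      linarith
    · exact h
  have hnpos : (0:ℝ) < n := Nat.cast_pos.2 hn0
  set T : ℝ := (n:ℝ)^(1-α) with hTdef
  have hT2 : 2 < T := hn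
  have hT0 : 0 < T := by linarith
  have hM0 : 0 ≤ M := le_trans (abs_nonneg _) (hM 0)
  have hW0 : 0 ≤ omega f ((n:ℝ)^(-α)) := omega_nonneg hM (Real.rpow_nonneg hnpos.le _)
  have hTn : (n:ℝ)^(-α) = T / (n:ℝ) := by
    have h1 := Real.rpow_sub hnpos (1-α) 1
    rw [Real.rpow_one] at h1
    rw [show (1-α-1 : ℝ) = -α by ring] at h1
    exact h1
  have int1 := integrable_integrand hq hβ hn0 hf hM x
  have int2 : Integrable (fun u => f x * Psi q β u) volume :=
    (integrable_Psi hq hβ).const_mul _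
  have hdiff : B q β n f x - f x = ∫ u, (f (x - u/n) - f x) * Psi q β u := by
    rw [B_eq hn0]
    have hfx : f x = ∫ u, f x * Psi q β u := by
      rw [MeasureTheory.integral_const_mul, integral_Psi hq hβ, mul_one]
    conv_lhs => rw [hfx]
    rw [← integral_sub int1 int2]
    congr 1; funext u; ring
  rw [hdiff]
  have habs : |∫ u, (f (x - u/n) - f x) * Psi q β u|
      ≤ ∫ u, |f (x - u/n) - f x| * Psi q β u := by
    have h := norm_integral_le_integral_norm (fun u => (f (x - u/n) - f x) * Psi q β u)
      (μ := volume)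
    simp only [Real.norm_eq_abs] at h
    calc |∫ u, (f (x - u/n) - f x) * Psi q β u|
        ≤ ∫ u, |(f (x - u/n) - f x) * Psi q β u| := h
      _ = ∫ u, |f (x - u/n) - f x| * Psi q β u := by
          congr 1; funext u
          rw [abs_mul, abs_of_nonneg (Psi_nonneg hq hβ u)]
  have intg : Integrable (fun u => |f (x - u/n) - f x| * Psi q β u) volume := by
    apply (integrable_Psi hq hβ).bdd_mul
    · exact (((hf.comp (by continuity)).sub continuous_const).abs).aestronglyMeasurable
    · refine Eventually.of_forall fun u => ?_
      rw [Real.norm_eq_abs, abs_abs]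
      calc |f (x - u/n) - f x| ≤ |f (x - u/n)| + |f x| := abs_sub _ _
        _ ≤ 2*M := by linarith [hM (x - u/n), hM x]
  set s : Set ℝ := Set.Icc (-T) T with hsdef
  have hsplit : ∫ u, |f (x - u/n) - f x| * Psi q β u
      = (∫ u in s, |f (x - u/n) - f x| * Psi q β u)
        + ∫ u in sᶜ, |f (x - u/n) - f x| * Psi q β u :=
    (integral_add_compl measurableSet_Icc intg).symm
  have hnear : ∫ u in s, |f (x - u/n) - f x| * Psi q β u ≤ omega f ((n:ℝ)^(-α)) := by
    have step : ∫ u in s, |f (x - u/n) - f x| * Psi q β u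
        ≤ ∫ u in s, omega f ((n:ℝ)^(-α)) * Psi q β u := by
      apply setIntegral_mono_on intg.integrableOn
        (((integrable_Psi hq hβ).const_mul _).integrableOn) measurableSet_Icc
      intro u hu
      apply mul_le_mul_of_nonneg_right _ (Psi_nonneg hq hβ u)
      apply le_omega hM
      have hu' : |u| ≤ T := abs_le.2 ⟨hu.1, hu.2⟩
      have : |x - u/n - x| = |u|/n := by
        rw [show x - u/n - x = -(u/n) by ring, abs_neg, abs_div,
          abs_of_nonneg hnpos.le]
      rw [this, hTn]
      gcongr
    have step2 : ∫ u in s, omega f ((n:ℝ)^(-α)) * Psi q β u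
        = omega f ((n:ℝ)^(-α)) * ∫ u in s, Psi q β u := MeasureTheory.integral_const_mul _ _
    have step3 : ∫ u in s, Psi q β u ≤ 1 := by
      rw [← integral_Psi hq hβ]
      exact setIntegral_le_integral (integrable_Psi hq hβ)
        (Eventually.of_forall (Psi_nonneg hq hβ))
    calc ∫ u in s, |f (x - u/n) - f x| * Psi q β u
        ≤ omega f ((n:ℝ)^(-α)) * ∫ u in s, Psi q β u := by rw [← step2]; exact step
      _ ≤ omega f ((n:ℝ)^(-α)) * 1 := mul_le_mul_of_nonneg_left step3 hW0
      _ = omega f ((n:ℝ)^(-α)) := mul_one _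
  have hfar : ∫ u in sᶜ, |f (x - u/n) - f x| * Psi q β u
      ≤ 2*(q+1/q)*M*Real.exp (-β*(T-1)) := by
    have step : ∫ u in sᶜ, |f (x - u/n) - f x| * Psi q β u
        ≤ ∫ u in sᶜ, (2*M) * Psi q β u := by
      apply setIntegral_mono_on intg.integrableOn
        (((integrable_Psi hq hβ).const_mul _).integrableOn) measurableSet_Icc.compl
      intro u hu
      apply mul_le_mul_of_nonneg_right _ (Psi_nonneg hq hβ u)
      calc |f (x - u/n) - f x| ≤ |f (x - u/n)| + |f x| := abs_sub _ _
        _ ≤ 2*M := by linarith [hM (x - u/n), hM x]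
    have hsub : sᶜ ⊆ Set.Iic (-T) ∪ Set.Ici T := by
      intro u hu
      rw [hsdef, Set.mem_compl_iff, Set.mem_Icc, not_and_or] at hu
      rcases hu with h | h
      · exact Or.inl (Set.mem_Iic.2 (by push_neg at h; linarith))
      · exact Or.inr (Set.mem_Ici.2 (by push_neg at h; linarith))
    have step2 : ∫ u in sᶜ, Psi q β u ≤ ∫ u in Set.Iic (-T) ∪ Set.Ici T, Psi q β u := by
      apply setIntegral_mono_set ((integrable_Psi hq hβ).integrableOn)
        (Eventually.of_forall (fun u => Psi_nonneg hq hβ u))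
        (HasSubset.Subset.eventuallyLE hsub)
    have step3 := tail_Psi hq hβ hT0
    calc ∫ u in sᶜ, |f (x - u/n) - f x| * Psi q β u
        ≤ ∫ u in sᶜ, (2*M) * Psi q β u := step
      _ = 2*M * ∫ u in sᶜ, Psi q β u := MeasureTheory.integral_const_mul _ _
      _ ≤ 2*M * ((q+1/q) * Real.exp (-β*(T-1))) := by
          apply mul_le_mul_of_nonneg_left _ (by positivity)
          exact le_trans step2 step3
      _ = 2*(q+1/q)*M*Real.exp (-β*(T-1)) := by ring
  calc |∫ u, (f (x - u/n) - f x) * Psi q β u|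
      ≤ ∫ u, |f (x - u/n) - f x| * Psi q β u := habs
    _ = _ + _ := hsplit
    _ ≤ omega f ((n:ℝ)^(-α)) + 2*(q+1/q)*M*Real.exp (-β*(T-1)) := add_le_add hnear hfar

theorem B_iterated (q β α : ℝ) (hq : 0 < q) (hβ : 0 < β)
    (hα0 : 0 < α) (hα1 : α < 1) (n : ℕ) (hn : 2 < (n : ℝ) ^ (1 - α)) (r : ℕ)
    (f : ℝ → ℝ) (hf : Continuous f) (hfb : ∃ M : ℝ, ∀ x : ℝ, |f x| ≤ M) :
    supNorm (fun x => (B q β n)^[r] f x - f x) ≤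
        r * supNorm (fun x => B q β n f x - f x) ∧
    r * supNorm (fun x => B q β n f x - f x) ≤
      r * (omega f ((n : ℝ) ^ (-α)) +
        2 * (q + 1/q) * supNorm f * Real.exp (-β * ((n : ℝ) ^ (1 - α) - 1))) := by
  obtain ⟨M₀, hM₀⟩ := hfb
  have hn0 : 0 < n := by
    rcases Nat.eq_zero_or_pos n with h | h
    · subst h
      rw [Nat.cast_zero, Real.zero_rpow (sub_ne_zero.2 (by linarith : (1:ℝ) ≠ α))] at hn
      linarith
    · exact h
  have hM : ∀ y, |f y| ≤ supNorm f := fun y => le_supNorm hM₀ y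
  have hM0 : 0 ≤ supNorm f := le_trans (abs_nonneg _) (hM 0)
  have hBf : ∀ x, |B q β n f x - f x| ≤ 2 * supNorm f := by
    intro x
    calc |B q β n f x - f x| ≤ |B q β n f x| + |f x| := abs_sub _ _
      _ ≤ 2 * supNorm f := by linarith [B_bound hq hβ hn0 hf hM x, hM x]
  have hDle : ∀ x, |B q β n f x - f x| ≤ supNorm (fun x => B q β n f x - f x) :=
    fun x => le_supNorm hBf x
  constructor
  · exact ciSup_le fun x => iter_bound hq hβ hn0 hf hM hDle r x
  · apply mul_le_mul_of_nonneg_left _ (Nat.cast_nonneg r)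
    exact ciSup_le fun x => B_single hq hβ hα0 hα1 hn hf hM x
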